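/- Let I be an index set and, for each i ∈ I, let G_i be a group generated by a finite subset S_i. Assume: for every ε > 0 there exist M > 0 and functions f_i : G_i → [0,∞) (i ∈ I) such that Σ_{γ∈G_i} f_i(γ)² = 1, Σ_{γ∈G_i} f_i(γ) ≤ M, and Σ_{γ∈G_i} (f_i(γ) − f_i(γs))² ≤ ε² for every s ∈ S_i. Then: for every ε > 0 there exist N ∈ ℕ and functions g_i : G_i → [0,∞) (i ∈ I) such that Σ_{γ∈G_i} g_i(γ)² = 1, Σ_{γ∈G_i} (g_i(γ) − g_i(γs))² ≤ ε² for every s ∈ S_i, and the support of each g_i has cardinality at most N. -/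

import Mathlib

lemma sq_add_summable' {α : Type*} {u v : α → ℝ} (hu : Summable fun x => u x ^ 2)
    (hv : Summable fun x => v x ^ 2) : Summable fun x => (u x + v x) ^ 2 := by
  apply Summable.of_nonneg_of_le (fun x => sq_nonneg _)
    (fun x => ?_) (((hu.mul_left 2).add (hv.mul_left 2)))
  nlinarith [sq_nonneg (u x - v x)]

lemma sq_sub_summable' {α : Type*} {u v : α → ℝ} (hu : Summable fun x => u x ^ 2)
    (hv : Summable fun x => v x ^ 2) : Summable fun x => (u x - v x) ^ 2 := by
  have hv' : Summable fun x => (-v x) ^ 2 := by simpa using hv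
  simpa [sub_eq_add_neg] using sq_add_summable' hu hv'

lemma sq_summable_norm' {α : Type*} {u : α → ℝ} (hu : Summable fun x => u x ^ 2) :
    Summable fun x => ‖u x‖ ^ (2 : ENNReal).toReal := by
  convert hu using 2 with x
  rw [ENNReal.toReal_ofNat, Real.rpow_two, Real.norm_eq_abs, sq_abs]

noncomputable def toLp' {α : Type*} (u : α → ℝ) (hu : Summable fun x => u x ^ 2) :
    lp (fun _ : α => ℝ) 2 := ⟨u, memℓp_gen (sq_summable_norm' hu)⟩

lemma norm_toLp' {α : Type*} (u : α → ℝ) (hu : Summable fun x => u x ^ 2) :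
    ‖toLp' u hu‖ = Real.sqrt (∑' x, u x ^ 2) := by
  have h2 : (0:ℝ) < (2 : ENNReal).toReal := by norm_num
  have H := lp.norm_rpow_eq_tsum h2 (toLp' u hu)
  have H2 : ‖toLp' u hu‖ ^ (2:ℕ) = ∑' x, u x ^ 2 := by
    rw [← Real.rpow_natCast]
    push_cast
    rw [ENNReal.toReal_ofNat] at H
    rw [H]
    congr 1; ext x
    rw [Real.rpow_two]
    show ‖u x‖ ^ 2 = _
    rw [Real.norm_eq_abs, sq_abs]
  rw [← H2, Real.sqrt_sq (norm_nonneg _)]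

lemma l2_tri' {α : Type*} {u v : α → ℝ} (hu : Summable fun x => u x ^ 2)
    (hv : Summable fun x => v x ^ 2) :
    Real.sqrt (∑' x, (u x + v x) ^ 2) ≤
      Real.sqrt (∑' x, u x ^ 2) + Real.sqrt (∑' x, v x ^ 2) := by
  have hw := sq_add_summable' hu hv
  have key : toLp' (fun x => u x + v x) hw = toLp' u hu + toLp' v hv := by
    apply Subtype.ext; funext x; rfl
  rw [← norm_toLp' u hu, ← norm_toLp' v hv, ← norm_toLp' _ hw, key]
  exact norm_add_le _ _

lemma key_lemma {α : Type*} (f : α → ℝ) (M t : ℝ) (hnn : ∀ x, 0 ≤ f x)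
    (hsq : ∑' x, f x ^ 2 = 1) (hsum : Summable f) (hM : ∑' x, f x ≤ M)
    (ht : 0 < t) (htM : t * M ≤ 1 / 2) :
    ∃ g : α → ℝ, (∀ x, 0 ≤ g x) ∧ (∑' x, g x ^ 2 = 1) ∧
      (Function.support g).Finite ∧ ((Nat.card (Function.support g)) : ℝ) ≤ M / t ∧
      ∀ (e : α ≃ α) (ε' : ℝ), 0 ≤ ε' → (∑' x, (f x - f (e x)) ^ 2 ≤ ε' ^ 2) →
        ∑' x, (g x - g (e x)) ^ 2 ≤ 2 * (ε' + 2 * Real.sqrt (t * M)) ^ 2 := by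
  -- basic facts
  have hsqf : Summable fun x => f x ^ 2 := by
    by_contra hc
    rw [tsum_eq_zero_of_not_summable hc] at hsq
    norm_num at hsq
  set A : Set α := {x | t ≤ f x} with hA
  have hAfin : A.Finite := by
    have h1 : ∀ᶠ x in Filter.cofinite, f x < t :=
      hsum.tendsto_cofinite_zero.eventually_lt_const ht
    simpa [hA, not_lt] using Filter.eventually_cofinite.mp h1
  set hfun : α → ℝ := A.indicator f with hhfun
  set d : α → ℝ := Aᶜ.indicator f with hd
  have hdecomp : ∀ x, f x = hfun x + d x := by
    intro x
    by_cases hx : x ∈ A <;> simp [hhfun, hd, hx]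
  have hh_sq_le : ∀ x, hfun x ^ 2 ≤ f x ^ 2 := by
    intro x; by_cases hx : x ∈ A <;> simp [hhfun, hx, sq_nonneg]
  have hsqh : Summable fun x => hfun x ^ 2 :=
    hsqf.of_nonneg_of_le (fun x => sq_nonneg _) hh_sq_le
  have hd_sq_le : ∀ x, d x ^ 2 ≤ t * f x := by
    intro x
    by_cases hx : x ∈ A
    · simp only [hd, Set.indicator_of_notMem (by simpa using hx : x ∉ Aᶜ)]
      have := mul_nonneg ht.le (hnn x); nlinarith
    · have : f x < t := by simpa [hA] using hx
      simp only [hd, Set.indicator_of_mem (Set.mem_compl hx)]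
      nlinarith [hnn x]
  have hsqd : Summable fun x => d x ^ 2 :=
    (hsum.mul_left t).of_nonneg_of_le (fun x => sq_nonneg _) hd_sq_le
  have hdsum_le : ∑' x, d x ^ 2 ≤ t * M := by
    calc ∑' x, d x ^ 2 ≤ ∑' x, t * f x := Summable.tsum_le_tsum hd_sq_le hsqd (hsum.mul_left t)
    _ = t * ∑' x, f x := tsum_mul_left
    _ ≤ t * M := by nlinarith
  have hsq_split : ∀ x, f x ^ 2 = hfun x ^ 2 + d x ^ 2 := by
    intro x; by_cases hx : x ∈ A <;> simp [hhfun, hd, hx]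
  have hsum_split : (1:ℝ) = (∑' x, hfun x ^ 2) + ∑' x, d x ^ 2 := by
    rw [← hsq, ← Summable.tsum_add hsqh hsqd]
    exact tsum_congr hsq_split
  have hdnn : 0 ≤ ∑' x, d x ^ 2 := tsum_nonneg fun x => sq_nonneg _
  have hhge : 1 / 2 ≤ ∑' x, hfun x ^ 2 := by linarith
  set c : ℝ := Real.sqrt (∑' x, hfun x ^ 2) with hc
  have hcpos : 0 < c := Real.sqrt_pos.2 (by linarith)
  have hcsq : c ^ 2 = ∑' x, hfun x ^ 2 :=
    Real.sq_sqrt (by linarith)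
  refine ⟨fun x => hfun x / c, fun x => ?_, ?_, ?_, ?_, ?_⟩
  · exact div_nonneg (Set.indicator_nonneg (fun y _ => hnn y) x) hcpos.le
  · have : ∀ x, (hfun x / c) ^ 2 = hfun x ^ 2 * (c ^ 2)⁻¹ := by
      intro x; field_simp
    rw [tsum_congr this, tsum_mul_right, hcsq]
    field_simp
  · apply hAfin.subset
    intro x hx
    simp only [Function.mem_support] at hx
    by_contra hxA
    simp [hhfun, Set.indicator_of_notMem hxA] at hx
  · -- card bound
    have hsub : Function.support (fun x => hfun x / c) ⊆ A := by
      intro x hx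
      simp only [Function.mem_support] at hx
      by_contra hxA
      simp [hhfun, Set.indicator_of_notMem hxA] at hx
    have hcard : Nat.card (Function.support fun x => hfun x / c) ≤ A.ncard := by
      rw [Nat.card_coe_set_eq]
      exact Set.ncard_le_ncard hsub hAfin
    have hAcard : (A.ncard : ℝ) * t ≤ M := by
      have h1 : ∑ x ∈ hAfin.toFinset, t ≤ ∑ x ∈ hAfin.toFinset, f x := by
        apply Finset.sum_le_sum
        intro x hx
        exact (hAfin.mem_toFinset.mp hx : t ≤ f x)
      have h2 : ∑ x ∈ hAfin.toFinset, f x ≤ ∑' x, f x :=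
        Summable.sum_le_tsum _ (fun x _ => hnn x) hsum
      rw [Finset.sum_const, nsmul_eq_mul] at h1
      rw [Set.ncard_eq_toFinset_card _ hAfin]
      linarith
    calc ((Nat.card (Function.support fun x => hfun x / c)) : ℝ) ≤ A.ncard := by
          exact_mod_cast hcard
    _ ≤ M / t := by rw [le_div_iff₀ ht]; linarith
  · -- translation estimate
    intro e ε' hε' hfe
    have hsqfe : Summable fun x => f (e x) ^ 2 := (Equiv.summable_iff (f := fun x => f x ^ 2) e).2 hsqf
    have hsqhe : Summable fun x => hfun (e x) ^ 2 := (Equiv.summable_iff (f := fun x => hfun x ^ 2) e).2 hsqh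
    have hsqde : Summable fun x => d (e x) ^ 2 := (Equiv.summable_iff (f := fun x => d x ^ 2) e).2 hsqd
    have hs1 : Summable fun x => (hfun x - f x) ^ 2 := sq_sub_summable' hsqh hsqf
    have hs2 : Summable fun x => (f x - f (e x)) ^ 2 := sq_sub_summable' hsqf hsqfe
    have hs3 : Summable fun x => (f (e x) - hfun (e x)) ^ 2 := sq_sub_summable' hsqfe hsqhe
    have hs23 : Summable fun x => ((f x - f (e x)) + (f (e x) - hfun (e x))) ^ 2 :=
      sq_add_summable' hs2 hs3
    -- bounds on the three pieces
    have hB1 : Real.sqrt (∑' x, (hfun x - f x) ^ 2) ≤ Real.sqrt (t * M) := by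
      apply Real.sqrt_le_sqrt
      calc ∑' x, (hfun x - f x) ^ 2 = ∑' x, d x ^ 2 := by
            apply tsum_congr; intro x
            rw [hdecomp x]; ring
      _ ≤ t * M := hdsum_le
    have hB2 : Real.sqrt (∑' x, (f x - f (e x)) ^ 2) ≤ ε' := by
      calc Real.sqrt (∑' x, (f x - f (e x)) ^ 2) ≤ Real.sqrt (ε' ^ 2) :=
            Real.sqrt_le_sqrt hfe
      _ = ε' := Real.sqrt_sq hε'
    have hB3 : Real.sqrt (∑' x, (f (e x) - hfun (e x)) ^ 2) ≤ Real.sqrt (t * M) := by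
      apply Real.sqrt_le_sqrt
      calc ∑' x, (f (e x) - hfun (e x)) ^ 2 = ∑' x, d (e x) ^ 2 := by
            apply tsum_congr; intro x
            rw [hdecomp (e x)]; ring
      _ = ∑' x, d x ^ 2 := e.tsum_eq fun x => d x ^ 2
      _ ≤ t * M := hdsum_le
    set X : ℝ := ∑' x, (hfun x - hfun (e x)) ^ 2 with hX
    have hXnn : 0 ≤ X := tsum_nonneg fun x => sq_nonneg _
    set B : ℝ := ε' + 2 * Real.sqrt (t * M) with hB
    have hBnn : 0 ≤ B := by positivity
    have hT : Real.sqrt X ≤ B := by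
      have heq : X = ∑' x, ((hfun x - f x) +
          ((f x - f (e x)) + (f (e x) - hfun (e x)))) ^ 2 := by
        apply tsum_congr; intro x; ring_nf
      rw [heq]
      calc Real.sqrt (∑' x, ((hfun x - f x) +
              ((f x - f (e x)) + (f (e x) - hfun (e x)))) ^ 2)
          ≤ Real.sqrt (∑' x, (hfun x - f x) ^ 2) +
            Real.sqrt (∑' x, ((f x - f (e x)) + (f (e x) - hfun (e x))) ^ 2) :=
            l2_tri' hs1 hs23
      _ ≤ Real.sqrt (∑' x, (hfun x - f x) ^ 2) +
            (Real.sqrt (∑' x, (f x - f (e x)) ^ 2) +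
             Real.sqrt (∑' x, (f (e x) - hfun (e x)) ^ 2)) := by
            exact add_le_add le_rfl (l2_tri' hs2 hs3)
      _ ≤ Real.sqrt (t * M) + (ε' + Real.sqrt (t * M)) := by
            exact add_le_add hB1 (add_le_add hB2 hB3)
      _ = B := by rw [hB]; ring
    have hXle : X ≤ B ^ 2 := by
      have := Real.sq_sqrt hXnn
      nlinarith [Real.sqrt_nonneg X]
    have hfinal : ∑' x, (hfun x / c - hfun (e x) / c) ^ 2 = X * (c ^ 2)⁻¹ := by
      rw [hX, ← tsum_mul_right]
      apply tsum_congr; intro x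
      field_simp
    rw [hfinal]
    have hcg : (1:ℝ) / 2 ≤ c ^ 2 := by rw [hcsq]; exact hhge
    have hci : c ^ 2 * (c ^ 2)⁻¹ = 1 := mul_inv_cancel₀ (by positivity)
    have hcinv : (c ^ 2)⁻¹ ≤ 2 := by nlinarith [inv_nonneg.2 (sq_nonneg c)]
    calc X * (c ^ 2)⁻¹ ≤ B ^ 2 * 2 :=
          mul_le_mul hXle hcinv (inv_nonneg.2 (sq_nonneg c)) (by positivity)
    _ = 2 * (ε' + 2 * Real.sqrt (t * M)) ^ 2 := by rw [hB]; ring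

theorem stmt_4 {I : Type*} (G : I → Type*) [∀ i, Group (G i)]
    (S : ∀ i, Finset (G i))
    (hgen : ∀ i, Subgroup.closure ((S i : Set (G i))) = ⊤)
    (h : ∀ ε : ℝ, 0 < ε → ∃ M : ℝ, 0 < M ∧ ∃ f : ∀ i, G i → ℝ, ∀ i,
      (∀ γ, 0 ≤ f i γ) ∧ (∑' γ, f i γ ^ 2 = 1) ∧
      Summable (f i) ∧ (∑' γ, f i γ ≤ M) ∧
      (∀ s ∈ S i, ∑' γ, (f i γ - f i (γ * s)) ^ 2 ≤ ε ^ 2)) :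
    ∀ ε : ℝ, 0 < ε → ∃ N : ℕ, ∃ g : ∀ i, G i → ℝ, ∀ i,
      (∀ γ, 0 ≤ g i γ) ∧ (∑' γ, g i γ ^ 2 = 1) ∧
      (Function.support (g i)).Finite ∧ Nat.card (Function.support (g i)) ≤ N ∧
      (∀ s ∈ S i, ∑' γ, (g i γ - g i (γ * s)) ^ 2 ≤ ε ^ 2) := by
  intro ε hε
  obtain ⟨M, hMpos, f, hf⟩ := h (ε / 4) (by linarith)
  set t : ℝ := min (1 / (2 * M)) (ε ^ 2 / (64 * M)) with htdef
  have ht : 0 < t := lt_min (by positivity) (by positivity)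
  have htM1 : t * M ≤ 1 / 2 := by
    have h2 := mul_le_mul_of_nonneg_right (min_le_left (1 / (2 * M)) (ε ^ 2 / (64 * M))) hMpos.le
    have h3 : 1 / (2 * M) * M = 1 / 2 := by field_simp
    rw [← htdef] at h2
    linarith
  have htM2 : t * M ≤ ε ^ 2 / 64 := by
    have h2 := mul_le_mul_of_nonneg_right (min_le_right (1 / (2 * M)) (ε ^ 2 / (64 * M))) hMpos.le
    have h3 : ε ^ 2 / (64 * M) * M = ε ^ 2 / 64 := by field_simp
    rw [← htdef] at h2
    linarith
  have hsqrt : Real.sqrt (t * M) ≤ ε / 8 := by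
    calc Real.sqrt (t * M) ≤ Real.sqrt (ε ^ 2 / 64) := Real.sqrt_le_sqrt htM2
    _ = ε / 8 := by
        rw [show ε ^ 2 / 64 = (ε / 8) ^ 2 by ring, Real.sqrt_sq (by linarith)]
  have key : ∀ i, ∃ g : G i → ℝ, (∀ x, 0 ≤ g x) ∧ (∑' x, g x ^ 2 = 1) ∧
      (Function.support g).Finite ∧ ((Nat.card (Function.support g)) : ℝ) ≤ M / t ∧
      ∀ (e : G i ≃ G i) (ε' : ℝ), 0 ≤ ε' → (∑' x, (f i x - f i (e x)) ^ 2 ≤ ε' ^ 2) →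
        ∑' x, (g x - g (e x)) ^ 2 ≤ 2 * (ε' + 2 * Real.sqrt (t * M)) ^ 2 := by
    intro i
    obtain ⟨hnn, hsq, hsum, hM, _⟩ := hf i
    exact key_lemma (f i) M t hnn hsq hsum hM ht htM1
  choose g hg1 hg2 hg3 hg4 hg5 using key
  refine ⟨⌈M / t⌉₊, g, fun i => ⟨hg1 i, hg2 i, hg3 i, ?_, ?_⟩⟩
  · have := (hg4 i).trans (Nat.le_ceil (M / t))
    exact_mod_cast this
  · intro s hs
    have hfs := (hf i).2.2.2.2 s hs
    have := hg5 i (Equiv.mulRight s) (ε / 4) (by linarith) (by simpa using hfs)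
    have h2 : ∑' x, (g i x - g i (x * s)) ^ 2 ≤
        2 * (ε / 4 + 2 * Real.sqrt (t * M)) ^ 2 := by simpa using this
    nlinarith [Real.sqrt_nonneg (t * M)]
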